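/- Let γ : R → T*R be a trajectory of the one-degree-of-freedom Hamiltonian H(Q,P) = λ(P² − Q²)/2 with λ > 0, at energy E ∈ (0, c²], entering a ball of radius c around the origin and exiting it. Then the time T spent inside the ball satisfies T = (1/λ) ln(c²/E) + τ, where |τ| is bounded uniformly for E ∈ (0, c²]. -/

import Mathlib

open MeasureTheory

set_option maxHeartbeats 1600000

lemma aux_disc (a₁ a₂ c x : ℝ) (ha1 : a₁ ≠ 0) (hx : 0 < x)
    (h : 2 * a₁ ^ 2 * x ^ 2 + 2 * a₂ ^ 2 * (x⁻¹) ^ 2 < c ^ 2) :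
    16 * a₁ ^ 2 * a₂ ^ 2 < c ^ 4 := by
  have hxx : x⁻¹ * x = 1 := inv_mul_cancel₀ hx.ne'
  have hkey : 2 * a₂ ^ 2 * ((x⁻¹) ^ 2 * x ^ 2) = 2 * a₂ ^ 2 := by
    rw [← mul_pow, hxx]; norm_num
  have hmul : 2 * a₁ ^ 2 * x ^ 4 + 2 * a₂ ^ 2 < c ^ 2 * x ^ 2 := by
    have h2 := mul_lt_mul_of_pos_right h (pow_pos hx 2)
    nlinarith [h2, hkey]
  nlinarith [sq_nonneg (4 * a₁ ^ 2 * x ^ 2 - c ^ 2),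
    mul_lt_mul_of_pos_left hmul (show (0:ℝ) < 8 * a₁ ^ 2 by positivity)]

lemma aux_mem (a₁ a₂ c s u : ℝ) (ha1 : a₁ ≠ 0) (hu : 0 < u) (hs0 : 0 ≤ s)
    (hs : s ^ 2 = c ^ 4 - 16 * a₁ ^ 2 * a₂ ^ 2) :
    2 * a₁ ^ 2 * u + 2 * a₂ ^ 2 * u⁻¹ ≤ c ^ 2 ↔
      (c ^ 2 - s) / (4 * a₁ ^ 2) ≤ u ∧ u ≤ (c ^ 2 + s) / (4 * a₁ ^ 2) := by
  have hA : (0:ℝ) < 4 * a₁ ^ 2 := by positivity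
  have hsum : 2 * a₁ ^ 2 * ((c ^ 2 - s) / (4 * a₁ ^ 2) + (c ^ 2 + s) / (4 * a₁ ^ 2)) = c ^ 2 := by
    field_simp; ring
  have hprod : 2 * a₁ ^ 2 * ((c ^ 2 - s) / (4 * a₁ ^ 2) * ((c ^ 2 + s) / (4 * a₁ ^ 2))) = 2 * a₂ ^ 2 := by
    field_simp
    linear_combination (-1) * hs
  set ulo := (c ^ 2 - s) / (4 * a₁ ^ 2) with hulo
  set uhi := (c ^ 2 + s) / (4 * a₁ ^ 2) with huhi
  have hule : ulo ≤ uhi := by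
    rw [hulo, huhi]; exact (div_le_div_iff_of_pos_right hA).mpr (by linarith)
  have efact : ∀ v : ℝ, 2 * a₁ ^ 2 * v ^ 2 - c ^ 2 * v + 2 * a₂ ^ 2
      = 2 * a₁ ^ 2 * (v - ulo) * (v - uhi) := by
    intro v
    linear_combination v * hsum - hprod
  have hrw : 2 * a₁ ^ 2 * u + 2 * a₂ ^ 2 * u⁻¹ = (2 * a₁ ^ 2 * u ^ 2 + 2 * a₂ ^ 2) / u := by
    field_simp
  rw [hrw, div_le_iff₀ hu]
  constructor
  · intro h
    have h' : 2 * a₁ ^ 2 * (u - ulo) * (u - uhi) ≤ 0 := by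
      rw [← efact u]; linarith
    constructor
    · by_contra hlt
      push_neg at hlt
      nlinarith [h', mul_pos (show (0:ℝ) < 2 * a₁ ^ 2 by positivity)
        (mul_pos (show (0:ℝ) < ulo - u by linarith) (show (0:ℝ) < uhi - u by linarith))]
    · by_contra hlt
      push_neg at hlt
      nlinarith [h', mul_pos (show (0:ℝ) < 2 * a₁ ^ 2 by positivity)
        (mul_pos (show (0:ℝ) < u - ulo by linarith) (show (0:ℝ) < u - uhi by linarith))]
  · rintro ⟨h1, h2⟩
    have h' : 2 * a₁ ^ 2 * (u - ulo) * (u - uhi) ≤ 0 := by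
      have := mul_nonneg (mul_nonneg (show (0:ℝ) ≤ 2 * a₁ ^ 2 by positivity)
        (show (0:ℝ) ≤ u - ulo by linarith)) (show (0:ℝ) ≤ uhi - u by linarith)
      nlinarith [this]
    rw [← efact u] at h'
    linarith

/-- For the hyperbolic Hamiltonian `H(Q,P) = λ(P² − Q²)/2` with `λ > 0`,
a trajectory `Q(t) = a₁e^{λt} + a₂e^{−λt}`, `P(t) = a₁e^{λt} − a₂e^{−λt}` at energy
`E = −2λa₁a₂ ∈ (0, c²]` that enters the ball of radius `c` around the origin spends in it a
time `T = (1/λ)ln(c²/E) + τ` with `|τ|` bounded uniformly in `E ∈ (0, c²]`. -/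
theorem passage_time_hyperbolic (lam c : ℝ) (hlam : 0 < lam) (hc : 0 < c) :
    ∃ τB : ℝ, 0 < τB ∧ ∀ E a₁ a₂ : ℝ, E ∈ Set.Ioc (0 : ℝ) (c ^ 2) →
      E = -(2 * lam * a₁ * a₂) →
      (let Q : ℝ → ℝ := fun t => a₁ * Real.exp (lam * t) + a₂ * Real.exp (-(lam * t))
       let P : ℝ → ℝ := fun t => a₁ * Real.exp (lam * t) - a₂ * Real.exp (-(lam * t))
       (∃ t : ℝ, (Q t) ^ 2 + (P t) ^ 2 < c ^ 2) →
       |(volume {t : ℝ | (Q t) ^ 2 + (P t) ^ 2 ≤ c ^ 2}).toReal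
          - (1 / lam) * Real.log (c ^ 2 / E)| ≤ τB) := by
  have hlog2 : (0:ℝ) ≤ Real.log 2 := Real.log_nonneg one_le_two
  refine ⟨(Real.log 2 + |Real.log (lam / 2)|) / lam + 1, ?_, ?_⟩
  · have h2 : (0:ℝ) ≤ |Real.log (lam / 2)| := abs_nonneg _
    have : (0:ℝ) ≤ (Real.log 2 + |Real.log (lam / 2)|) / lam :=
      div_nonneg (by linarith) hlam.le
    linarith
  intro E a₁ a₂ hE hEeq
  obtain ⟨hE0, hEc⟩ := hE
  intro Q P hEnter
  -- basic facts
  have ha1 : a₁ ≠ 0 := by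
    intro h; rw [h] at hEeq; simp at hEeq; linarith
  have ha2 : a₂ ≠ 0 := by
    intro h; rw [h] at hEeq; simp at hEeq; linarith
  have ha1sq : 0 < a₁ ^ 2 := by positivity
  have ha2sq : 0 < a₂ ^ 2 := by positivity
  have hEsq : E ^ 2 = 4 * lam ^ 2 * a₁ ^ 2 * a₂ ^ 2 := by rw [hEeq]; ring
  -- discriminant is positive
  obtain ⟨t₀, ht₀⟩ := hEnter
  simp only [Q, P] at ht₀
  have hx₀ : 0 < Real.exp (lam * t₀) := Real.exp_pos _
  have ht₀' : 2 * a₁ ^ 2 * (Real.exp (lam * t₀)) ^ 2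
      + 2 * a₂ ^ 2 * ((Real.exp (lam * t₀))⁻¹) ^ 2 < c ^ 2 := by
    have hxinv : Real.exp (-(lam * t₀)) = (Real.exp (lam * t₀))⁻¹ := Real.exp_neg _
    rw [hxinv] at ht₀
    nlinarith [ht₀]
  have hD : 16 * a₁ ^ 2 * a₂ ^ 2 < c ^ 4 := aux_disc a₁ a₂ c _ ha1 hx₀ ht₀'
  have hDpos : 0 < c ^ 4 - 16 * a₁ ^ 2 * a₂ ^ 2 := by linarith
  set s : ℝ := Real.sqrt (c ^ 4 - 16 * a₁ ^ 2 * a₂ ^ 2) with hsdef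
  have hs2 : s ^ 2 = c ^ 4 - 16 * a₁ ^ 2 * a₂ ^ 2 := Real.sq_sqrt hDpos.le
  have hspos : 0 < s := Real.sqrt_pos.mpr hDpos
  have hslt : s < c ^ 2 := by
    rw [hsdef]
    calc Real.sqrt (c ^ 4 - 16 * a₁ ^ 2 * a₂ ^ 2) < Real.sqrt (c ^ 4) :=
          Real.sqrt_lt_sqrt hDpos.le (by nlinarith)
    _ = c ^ 2 := by
          rw [show c ^ 4 = (c ^ 2) ^ 2 by ring, Real.sqrt_sq (by positivity)]
  -- roots
  set ulo : ℝ := (c ^ 2 - s) / (4 * a₁ ^ 2) with hulodef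
  set uhi : ℝ := (c ^ 2 + s) / (4 * a₁ ^ 2) with huhidef
  have hulopos : 0 < ulo := div_pos (by linarith) (by positivity)
  have huhipos : 0 < uhi := div_pos (by linarith) (by positivity)
  have hule : ulo ≤ uhi := by
    rw [hulodef, huhidef]
    exact (div_le_div_iff_of_pos_right (by positivity)).mpr (by linarith)
  set tlo : ℝ := Real.log ulo / (2 * lam) with htlodef
  set thi : ℝ := Real.log uhi / (2 * lam) with hthidef
  have htle : tlo ≤ thi := by
    rw [htlodef, hthidef]
    exact (div_le_div_iff_of_pos_right (by positivity)).mpr (Real.log_le_log hulopos hule)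
  -- set identity
  have hset : {t : ℝ | (Q t) ^ 2 + (P t) ^ 2 ≤ c ^ 2} = Set.Icc tlo thi := by
    ext t
    simp only [Q, P, Set.mem_setOf_eq, Set.mem_Icc]
    have hx : 0 < Real.exp (lam * t) := Real.exp_pos _
    have hxinv : Real.exp (-(lam * t)) = (Real.exp (lam * t))⁻¹ := Real.exp_neg _
    have hu : (Real.exp (lam * t)) ^ 2 = Real.exp (2 * lam * t) := by
      rw [show (2:ℝ) * lam * t = lam * t + lam * t by ring, Real.exp_add, sq]
    have hu' : 0 < Real.exp (2 * lam * t) := Real.exp_pos _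
    have hlhs : (a₁ * Real.exp (lam * t) + a₂ * Real.exp (-(lam * t))) ^ 2
        + (a₁ * Real.exp (lam * t) - a₂ * Real.exp (-(lam * t))) ^ 2
        = 2 * a₁ ^ 2 * Real.exp (2 * lam * t) + 2 * a₂ ^ 2 * (Real.exp (2 * lam * t))⁻¹ := by
      rw [hxinv, ← hu, ← inv_pow]
      ring
    rw [hlhs, aux_mem a₁ a₂ c s _ ha1 hu' hspos.le hs2]
    rw [← hulodef, ← huhidef]
    constructor
    · rintro ⟨h1, h2⟩
      constructor
      · rw [htlodef, div_le_iff₀ (by positivity)]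
        have := Real.log_le_log hulopos h1
        rw [Real.log_exp] at this
        linarith
      · rw [hthidef, le_div_iff₀ (by positivity)]
        have := Real.log_le_log hu' h2
        rw [Real.log_exp] at this
        linarith
    · rintro ⟨h1, h2⟩
      rw [htlodef, div_le_iff₀ (by positivity)] at h1
      rw [hthidef, le_div_iff₀ (by positivity)] at h2
      constructor
      · calc ulo = Real.exp (Real.log ulo) := (Real.exp_log hulopos).symm
        _ ≤ Real.exp (2 * lam * t) := Real.exp_le_exp.mpr (by linarith)
      · calc Real.exp (2 * lam * t) ≤ Real.exp (Real.log uhi) :=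
            Real.exp_le_exp.mpr (by linarith)
        _ = uhi := Real.exp_log huhipos
  rw [hset, Real.volume_Icc, ENNReal.toReal_ofReal (by linarith)]
  -- compute thi - tlo
  have hlogulo : Real.log ulo = Real.log (c ^ 2 - s) - Real.log (4 * a₁ ^ 2) := by
    rw [hulodef]; exact Real.log_div (by linarith) (by positivity)
  have hloguhi : Real.log uhi = Real.log (c ^ 2 + s) - Real.log (4 * a₁ ^ 2) := by
    rw [huhidef]; exact Real.log_div (by positivity) (by positivity)
  have hprod : (c ^ 2 - s) * (c ^ 2 + s) = 4 * E ^ 2 / lam ^ 2 := by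
    rw [eq_div_iff (by positivity)]
    linear_combination (-(lam ^ 2)) * hs2 - 4 * hEsq
  have hcs_eq : c ^ 2 - s = 4 * E ^ 2 / lam ^ 2 / (c ^ 2 + s) := by
    rw [eq_div_iff (by positivity)]
    linear_combination hprod
  have hlogcs : Real.log (c ^ 2 - s)
      = Real.log 4 + 2 * Real.log E - 2 * Real.log lam - Real.log (c ^ 2 + s) := by
    rw [hcs_eq, Real.log_div (by positivity) (by positivity),
      Real.log_div (by positivity) (by positivity), Real.log_mul (by norm_num) (by positivity),
      Real.log_pow, Real.log_pow]
    push_cast; ring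
  have hlog4 : Real.log 4 = 2 * Real.log 2 := by
    rw [show (4:ℝ) = 2 ^ 2 by norm_num, Real.log_pow]; push_cast; ring
  have hlogc2E : Real.log (c ^ 2 / E) = 2 * Real.log c - Real.log E := by
    rw [Real.log_div (by positivity) (ne_of_gt hE0), Real.log_pow]; push_cast; ring
  have hloglam2 : Real.log (lam / 2) = Real.log lam - Real.log 2 :=
    Real.log_div (ne_of_gt hlam) (by norm_num)
  -- r := log(c²+s) - 2 log c ∈ [0, log 2]
  have hr0 : 2 * Real.log c ≤ Real.log (c ^ 2 + s) := by
    have := Real.log_le_log (by positivity) (show c ^ 2 ≤ c ^ 2 + s by linarith)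
    rw [Real.log_pow] at this
    push_cast at this
    linarith
  have hr1 : Real.log (c ^ 2 + s) ≤ 2 * Real.log c + Real.log 2 := by
    have h2 : c ^ 2 + s ≤ 2 * c ^ 2 := by linarith
    have := Real.log_le_log (by positivity) h2
    rw [Real.log_mul (by norm_num) (by positivity), Real.log_pow] at this
    push_cast at this
    linarith
  have hexpr : thi - tlo - 1 / lam * Real.log (c ^ 2 / E)
      = (1 / lam) * (Real.log (lam / 2) + (Real.log (c ^ 2 + s) - 2 * Real.log c)) := by
    rw [htlodef, hthidef, hlogulo, hloguhi, hlogcs, hlog4, hlogc2E, hloglam2]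
    field_simp
    ring
  rw [hexpr, abs_mul, abs_of_pos (show (0:ℝ) < 1 / lam by positivity)]
  have habs : |Real.log (lam / 2) + (Real.log (c ^ 2 + s) - 2 * Real.log c)|
      ≤ |Real.log (lam / 2)| + Real.log 2 := by
    have h1 := abs_add_le (Real.log (lam / 2)) (Real.log (c ^ 2 + s) - 2 * Real.log c)
    have h2 : |Real.log (c ^ 2 + s) - 2 * Real.log c| ≤ Real.log 2 := by
      rw [abs_le]; constructor <;> linarith
    linarith
  calc 1 / lam * |Real.log (lam / 2) + (Real.log (c ^ 2 + s) - 2 * Real.log c)|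
      ≤ 1 / lam * (|Real.log (lam / 2)| + Real.log 2) :=
        mul_le_mul_of_nonneg_left habs (by positivity)
    _ = (Real.log 2 + |Real.log (lam / 2)|) / lam := by ring
    _ ≤ (Real.log 2 + |Real.log (lam / 2)|) / lam + 1 := by linarith
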